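/- Let R be a perfect commutative ring of characteristic p and let S = {r ∈ R : r^p = r}, an 𝔽_p-subalgebra of R. An element x ∈ W(R) satisfies φ(x) = x if and only if every Witt component of x lies in S; equivalently, the fixed subring of φ acting on W(R) is exactly the image of the canonical injective ring homomorphism W(S) → W(R). -/

import Mathlib

open WittVector

/-- Let `R` be a perfect commutative ring of characteristic `p` and
`S = {r ∈ R | r ^ p = r}` (the equalizer of the Frobenius of `R` and the identity, an
`𝔽_p`-subalgebra of `R`).  An element `x ∈ W(R)` is fixed by the Witt vector Frobenius
`φ` iff all its Witt components lie in `S`, equivalently iff `x` lies in the image of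
the canonical injective ring homomorphism `W(S) → W(R)`. -/
theorem wittVector_frobenius_fixed_points
    {p : ℕ} [hp : Fact p.Prime] {R : Type*} [CommRing R] [CharP R p] [PerfectRing R p] :
    Function.Injective
      (WittVector.map (R := ((_root_.frobenius R p).eqLocus (RingHom.id R)))
        ((_root_.frobenius R p).eqLocus (RingHom.id R)).subtype
        : WittVector p ((_root_.frobenius R p).eqLocus (RingHom.id R)) → WittVector p R) ∧
    ∀ x : WittVector p R,
      ((frobenius x = x ↔ ∀ n : ℕ, (x.coeff n) ^ p = x.coeff n) ∧
       (frobenius x = x ↔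
         x ∈ (WittVector.map
            ((_root_.frobenius R p).eqLocus (RingHom.id R)).subtype).range)) := by
  have hcoeff : ∀ x : WittVector p R,
      (frobenius x = x ↔ ∀ n : ℕ, (x.coeff n) ^ p = x.coeff n) := by
    intro x
    constructor
    · intro h n
      conv_rhs => rw [← h]
      rw [WittVector.coeff_frobenius_charP]
    · intro h
      ext n
      rw [WittVector.coeff_frobenius_charP, h n]
  refine ⟨WittVector.map_injective _ Subtype.coe_injective, fun x => ⟨hcoeff x, ?_⟩⟩
  rw [hcoeff x]
  constructor
  · intro h
    refine ⟨WittVector.mk p fun n => ⟨x.coeff n, ?_⟩, ?_⟩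
    · show _root_.frobenius R p (x.coeff n) = RingHom.id R (x.coeff n)
      simpa [_root_.frobenius_def] using h n
    · ext n
      simp [WittVector.map_coeff, WittVector.coeff_mk]
  · rintro ⟨y, rfl⟩ n
    rw [WittVector.map_coeff]
    exact (y.coeff n).2
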